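/- For a, b in (0,1], every x in [0,1] \ A with x ≠ 0 and x ≠ 1 has some iterate f^n(x) lying in A = (1/2 - b/4, 1/2 + a/4], where f = f_{a,b}. -/
import Mathlib


private lemma aux_right (b y : ℝ) (hb0 : 0 < b) (hb1 : b ≤ 1) (hy : 1/2 < y) :
    1/2 - b/4 < y * (1 - b + b * y) := by
  nlinarith [mul_nonneg (by linarith : (0:ℝ) ≤ y - 1/2) (by linarith : (0:ℝ) ≤ 1 - b),
    mul_pos (mul_pos hb0 (by linarith : (0:ℝ) < y - 1/2)) (by linarith : (0:ℝ) < y + 1/2)]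

noncomputable def fab (a b x : ℝ) : ℝ :=
  if x ≤ 1/2 then x * (1 + a - a * x) else x * (1 - b + b * x)

theorem stmt8 (a b : ℝ) (ha : a ∈ Set.Ioc (0:ℝ) 1) (hb : b ∈ Set.Ioc (0:ℝ) 1)
    (x : ℝ) (hx : x ∈ Set.Icc (0:ℝ) 1 \ Set.Ioc (1/2 - b/4) (1/2 + a/4))
    (hx0 : x ≠ 0) (hx1 : x ≠ 1) :
    ∃ n : ℕ, (fab a b)^[n] x ∈ Set.Ioc (1/2 - b/4) (1/2 + a/4) := by
  obtain ⟨ha0, ha1⟩ := ha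
  obtain ⟨hb0, hb1⟩ := hb
  obtain ⟨⟨hxl, hxr⟩, hxA⟩ := hx
  have hx0p : 0 < x := lt_of_le_of_ne hxl (Ne.symm hx0)
  have hx1p : x < 1 := lt_of_le_of_ne hxr hx1
  rw [Set.mem_Ioc, not_and_or, not_lt, not_le] at hxA
  set g := fab a b with hg
  rcases hxA with hL | hR
  · -- left case : 0 < x ≤ 1/2 - b/4
    set δ : ℝ := a * x / 2 with hδ
    have hδpos : 0 < δ := by positivity
    have key : ∀ k : ℕ, (∀ j < k, g^[j] x ≤ 1/2 - b/4) →
        x + k * δ ≤ g^[k] x := by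
      intro k
      induction k with
      | zero => intro _; simp
      | succ k ih =>
        intro h
        have hyk : x + k * δ ≤ g^[k] x := ih (fun j hj => h j (hj.trans (Nat.lt_succ_self k)))
        have hyT : g^[k] x ≤ 1/2 - b/4 := h k (Nat.lt_succ_self k)
        set y := g^[k] x with hy
        have hyx : x ≤ y := by nlinarith
        have hy2 : y ≤ 1/2 := by linarith
        have : g^[k+1] x = g y := by rw [Function.iterate_succ_apply']
        rw [this]
        have hgy : g y = y * (1 + a - a * y) := by
          rw [hg, fab, if_pos hy2]
        rw [hgy]
        have hxy : x * (1/2) ≤ y * (1 - y) := by nlinarith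
        have h1 := mul_le_mul_of_nonneg_left hxy ha0.le
        push_cast
        nlinarith
    have hex : ∃ n : ℕ, 1/2 - b/4 < g^[n] x := by
      obtain ⟨n, hn⟩ := exists_nat_gt ((1/2 - b/4) / δ)
      by_contra hcon
      push_neg at hcon
      have h1 := key n (fun j _ => hcon j)
      have h2 : (1/2 - b/4) < n * δ := by
        rw [div_lt_iff₀ hδpos] at hn; linarith
      have := hcon n
      linarith
    set N := Nat.find hex with hN
    have hNs : 1/2 - b/4 < g^[N] x := Nat.find_spec hex
    have hN0 : N ≠ 0 := by
      intro h
      rw [h] at hNs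
      simp at hNs
      linarith
    obtain ⟨m, hm⟩ : ∃ m, N = m + 1 := ⟨N - 1, (Nat.succ_pred_eq_of_pos (Nat.pos_of_ne_zero hN0)).symm⟩
    have hmin : ∀ j < N, g^[j] x ≤ 1/2 - b/4 := by
      intro j hj
      have := Nat.find_min hex hj
      linarith [not_lt.mp this]
    have hym : g^[m] x ≤ 1/2 - b/4 := hmin m (by omega)
    have hyx : x + m * δ ≤ g^[m] x := key m (fun j hj => hmin j (by omega))
    set y := g^[m] x with hy
    have hmδ : (0:ℝ) ≤ m * δ := by positivity
    have hyp : 0 < y := by linarith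
    have hy2 : y ≤ 1/2 := by linarith
    refine ⟨N, hNs, ?_⟩
    have : g^[N] x = g y := by rw [hm, Function.iterate_succ_apply']
    rw [this, hg, fab, if_pos hy2]
    nlinarith [sq_nonneg (1/2 - y)]
  · -- right case : 1/2 + a/4 < x < 1
    set ε : ℝ := b * (1 - x) / 2 with hε
    have hεpos : 0 < ε := by
      have : 0 < 1 - x := by linarith
      positivity
    have key : ∀ k : ℕ, (∀ j < k, 1/2 + a/4 < g^[j] x) →
        g^[k] x ≤ x - k * ε := by
      intro k
      induction k with
      | zero => intro _; simp
      | succ k ih =>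
        intro h
        have hyk : g^[k] x ≤ x - k * ε := ih (fun j hj => h j (hj.trans (Nat.lt_succ_self k)))
        have hyT : 1/2 + a/4 < g^[k] x := h k (Nat.lt_succ_self k)
        set y := g^[k] x with hy
        have hyx : y ≤ x := by nlinarith
        have hy2 : ¬ (y ≤ 1/2) := by push_neg; linarith
        have hstep : g^[k+1] x = g y := by rw [Function.iterate_succ_apply']
        rw [hstep, hg, fab, if_neg hy2]
        have hy1 : 1 - y ≥ 0 := by linarith
        have hxy : (1 - x) * (1/2) ≤ y * (1 - y) := by
          nlinarith [mul_nonneg (by linarith : (0:ℝ) ≤ y - 1/2) hy1]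
        have h1 := mul_le_mul_of_nonneg_left hxy hb0.le
        push_cast
        nlinarith
    have hex : ∃ n : ℕ, g^[n] x ≤ 1/2 + a/4 := by
      obtain ⟨n, hn⟩ := exists_nat_gt ((x - (1/2 + a/4)) / ε)
      by_contra hcon
      push_neg at hcon
      have h1 := key n (fun j _ => hcon j)
      have h2 : x - (1/2 + a/4) < n * ε := by
        rw [div_lt_iff₀ hεpos] at hn; linarith
      have := hcon n
      linarith
    set N := Nat.find hex with hN
    have hNs : g^[N] x ≤ 1/2 + a/4 := Nat.find_spec hex
    have hN0 : N ≠ 0 := by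
      intro h
      rw [h] at hNs
      simp at hNs
      linarith
    obtain ⟨m, hm⟩ : ∃ m, N = m + 1 := ⟨N - 1, (Nat.succ_pred_eq_of_pos (Nat.pos_of_ne_zero hN0)).symm⟩
    have hmin : ∀ j < N, 1/2 + a/4 < g^[j] x := by
      intro j hj
      have := Nat.find_min hex hj
      linarith [not_le.mp this]
    have hym : 1/2 + a/4 < g^[m] x := hmin m (by omega)
    set y := g^[m] x with hy
    have hy2 : ¬ (y ≤ 1/2) := by push_neg; linarith
    refine ⟨N, ?_, hNs⟩
    have hstep : g^[N] x = g y := by rw [hm, Function.iterate_succ_apply']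
    rw [hstep, hg, fab, if_neg hy2]
    push_neg at hy2
    exact aux_right b y hb0 hb1 hy2
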